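/- Let 𝔤 be a nilpotent Lie algebra over ℝ and X, Y ∈ 𝔤. If [X,Y] lies in the span of X and Y, then [X,Y] = 0. -/

import Mathlib

lemma aux_nilp_eig (L : Type*) [AddCommGroup L] [Module ℝ L] (f : Module.End ℝ L)
    (hf : IsNilpotent f) (c : ℝ) (v : L) (hv : f v = c • v) (hc : c ≠ 0) : v = 0 := by
  obtain ⟨n, hn⟩ := hf
  have key : ∀ k, (f ^ k) v = c ^ k • v := by
    intro k
    induction k with
    | zero => simp
    | succ k ih =>
      rw [pow_succ', Module.End.mul_apply, ih, map_smul, hv, smul_smul, pow_succ]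
  have := key n
  rw [hn] at this
  simp only [LinearMap.zero_apply] at this
  have hcn : c ^ n ≠ 0 := pow_ne_zero _ hc
  have := this.symm
  rwa [smul_eq_zero, or_iff_right hcn] at this

theorem stmt_0 (L : Type*) [LieRing L] [LieAlgebra ℝ L] [FiniteDimensional ℝ L]
    [LieRing.IsNilpotent L] (X Y : L)
    (h : ⁅X, Y⁆ ∈ Submodule.span ℝ ({X, Y} : Set L)) : ⁅X, Y⁆ = 0 := by
  obtain ⟨a, b, hab⟩ := Submodule.mem_span_pair.mp h
  have hX : IsNilpotent (LieAlgebra.ad ℝ L X) :=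
    LieModule.isNilpotent_toEnd_of_isNilpotent ℝ L L X
  have hY : IsNilpotent (LieAlgebra.ad ℝ L Y) :=
    LieModule.isNilpotent_toEnd_of_isNilpotent ℝ L L Y
  rcases eq_or_ne b 0 with hb | hb
  · rcases eq_or_ne a 0 with ha | ha
    · rw [ha, hb] at hab; simpa using hab.symm
    · -- Z = a • X, so ⁅Y, Z⁆ = -a • Z
      have hZ : ⁅Y, ⁅X, Y⁆⁆ = (-a) • ⁅X, Y⁆ := by
        have : ⁅X, Y⁆ = a • X := by rw [← hab, hb]; simp
        rw [this, lie_smul, ← lie_skew Y X, this]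
        module
      exact aux_nilp_eig L (LieAlgebra.ad ℝ L Y) hY (-a) _ hZ (neg_ne_zero.mpr ha)
  · have hZ : ⁅X, ⁅X, Y⁆⁆ = b • ⁅X, Y⁆ := by
      conv_lhs => rw [← hab]
      simp [lie_smul]
    exact aux_nilp_eig L (LieAlgebra.ad ℝ L X) hX b _ hZ hb
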